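/- Let R be a G-graded unital ring such that every R_g is a simple R_e-bimodule. Then the following are equivalent: (i) for all subsets S, T ⊆ G, R_S ≅ R_T as R_e-bimodules iff S = T; (ii) for all g, h ∈ G, R_g ≅ R_h iff g = h. -/

import Mathlib

open DirectSum Pointwise

namespace Controlled

variable {G R : Type*} [AddGroup G] [DecidableEq G] [Ring R]

/-- `P` is an `R_e`-sub-bimodule of `R` (w.r.t. the grading `𝒜`, written additively,
so `R_e = 𝒜 0`). -/
def IsSubBimodule (𝒜 : G → AddSubgroup R) (P : AddSubgroup R) : Prop :=
  ∀ a ∈ 𝒜 0, ∀ x ∈ P, a * x ∈ P ∧ x * a ∈ P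

/-- The `R_e`-bimodule `R_H = ⊕_{h ∈ H} R_h` (internally, the subgroup generated by
the `R_h`, `h ∈ H`; the sum is automatically direct). `R_∅ = ⊥ = {0}`. -/
def RH (𝒜 : G → AddSubgroup R) (H : Set G) : AddSubgroup R := ⨆ h ∈ H, 𝒜 h

/-- An `R_e`-bimodule isomorphism between additive subgroups `P` and `Q` of `R`:
an additive equivalence compatible with left and right multiplication by `R_e = 𝒜 0`. -/
structure BimodIso (𝒜 : G → AddSubgroup R) (P Q : AddSubgroup R) where
  toEquiv : P ≃+ Q
  map_left : ∀ (a x : R), a ∈ 𝒜 0 → ∀ (hx : x ∈ P) (hax : a * x ∈ P),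
    (toEquiv ⟨a * x, hax⟩ : R) = a * (toEquiv ⟨x, hx⟩ : R)
  map_right : ∀ (a x : R), a ∈ 𝒜 0 → ∀ (hx : x ∈ P) (hxa : x * a ∈ P),
    (toEquiv ⟨x * a, hxa⟩ : R) = (toEquiv ⟨x, hx⟩ : R) * a

/-- `R` is `G`-controlled: `H ↦ R_H` is a bijection from subsets of `G` onto the
`R_e`-sub-bimodules of `R`, and `R_S ≅ R_T` (as `R_e`-bimodules) iff `S = T`. -/
def IsControlled (𝒜 : G → AddSubgroup R) : Prop :=
  (∀ H : Set G, IsSubBimodule 𝒜 (RH 𝒜 H)) ∧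
  Function.Injective (RH 𝒜) ∧
  (∀ P : AddSubgroup R, IsSubBimodule 𝒜 P → ∃ H : Set G, RH 𝒜 H = P) ∧
  (∀ S T : Set G, Nonempty (BimodIso 𝒜 (RH 𝒜 S) (RH 𝒜 T)) ↔ S = T)

/-- `P` is a (nonzero) simple `R_e`-bimodule contained in `R`. -/
def IsSimpleBimod (𝒜 : G → AddSubgroup R) (P : AddSubgroup R) : Prop :=
  P ≠ ⊥ ∧ ∀ Q : AddSubgroup R, Q ≤ P → IsSubBimodule 𝒜 Q → Q = ⊥ ∨ Q = P

/-- The product `AB` of two additive subgroups of `R`: all finite sums of products. -/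
def mulSub (A B : AddSubgroup R) : AddSubgroup R :=
  AddSubgroup.closure ((A : Set R) * (B : Set R))

/-- `R` is strongly graded: `R_g R_h = R_{g+h}` for all `g, h`. -/
def IsStronglyGraded (𝒜 : G → AddSubgroup R) : Prop :=
  ∀ g h : G, mulSub (𝒜 g) (𝒜 h) = 𝒜 (g + h)

/-- `C_R(R_e) = Z(R_e)` as subsets of `R`. -/
def CentralizerEqCenter (𝒜 : G → AddSubgroup R) : Prop :=
  {x : R | ∀ r ∈ 𝒜 0, x * r = r * x} = {x : R | x ∈ 𝒜 0 ∧ ∀ r ∈ 𝒜 0, x * r = r * x}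

/-- A two-sided ideal `I` is graded if each homogeneous component of each of its
elements again lies in `I` (equivalently, `I = ⊕_g (I ∩ R_g)`). -/
def IsGradedIdeal (𝒜 : G → AddSubgroup R) [GradedRing 𝒜] (I : TwoSidedIdeal R) : Prop :=
  ∀ x ∈ I, ∀ g : G, (DirectSum.decompose 𝒜 x g : R) ∈ I

/-- `R` is graded simple: the only graded two-sided ideals are `{0}` and `R`. -/
def IsGradedSimple (𝒜 : G → AddSubgroup R) [GradedRing 𝒜] : Prop :=
  ∀ I : TwoSidedIdeal R, IsGradedIdeal 𝒜 I → I = ⊥ ∨ I = ⊤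

end Controlled

variable {G R : Type*} [AddGroup G] [DecidableEq G] [Ring R]


section Stmt8Aux
set_option linter.unusedSectionVars false

namespace Stmt8Aux

open Controlled

variable {G R : Type*} [AddGroup G] [DecidableEq G] [Ring R]
variable (𝒜 : G → AddSubgroup R)

lemma mem_RH {H : Set G} {g : G} (hg : g ∈ H) {x : R} (hx : x ∈ 𝒜 g) :
    x ∈ RH 𝒜 H :=
  (le_iSup₂ (f := fun h (_ : h ∈ H) => 𝒜 h) g hg) hx

lemma RH_le {H : Set G} {K : AddSubgroup R} (h : ∀ g ∈ H, 𝒜 g ≤ K) : RH 𝒜 H ≤ K :=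
  iSup₂_le h

variable [GradedRing 𝒜]

lemma mul_mem_zero_left {a x : R} {g : G} (ha : a ∈ 𝒜 0) (hx : x ∈ 𝒜 g) : a * x ∈ 𝒜 g := by
  simpa using SetLike.mul_mem_graded ha hx

lemma mul_mem_zero_right {a x : R} {g : G} (ha : a ∈ 𝒜 0) (hx : x ∈ 𝒜 g) : x * a ∈ 𝒜 g := by
  simpa using SetLike.mul_mem_graded hx ha

lemma isSubBimodule_RH (H : Set G) : IsSubBimodule 𝒜 (RH 𝒜 H) := by
  intro a ha x hx
  have : RH 𝒜 H ≤ ((RH 𝒜 H).comap (AddMonoidHom.mulLeft a)) ⊓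
      ((RH 𝒜 H).comap (AddMonoidHom.mulRight a)) := by
    refine RH_le 𝒜 fun g hg y hy => ?_
    exact ⟨mem_RH 𝒜 hg (mul_mem_zero_left 𝒜 ha hy), mem_RH 𝒜 hg (mul_mem_zero_right 𝒜 ha hy)⟩
  exact this hx

/-- the `g`-component map as an `AddMonoidHom` `R →+ R`. -/
def decomposeHom (g : G) : R →+ R where
  toFun x := decompose 𝒜 x g
  map_zero' := by simp
  map_add' x y := by simp

lemma decompose_eq_zero_of_not_mem {H : Set G} {x : R} (hx : x ∈ RH 𝒜 H) {g : G}
    (hg : g ∉ H) : (decompose 𝒜 x g : R) = 0 := by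
  have : RH 𝒜 H ≤ (decomposeHom 𝒜 g).ker := by
    refine RH_le 𝒜 fun h hh y hy => ?_
    have hne : h ≠ g := by rintro rfl; exact hg hh
    simp [AddMonoidHom.mem_ker, decomposeHom, decompose_of_mem_ne 𝒜 hy hne]
  simpa [AddMonoidHom.mem_ker, decomposeHom] using this hx

lemma exists_component {T : Set G} {y : R} (hy : y ∈ RH 𝒜 T) (hy0 : y ≠ 0) :
    ∃ t ∈ T, (decompose 𝒜 y t : R) ≠ 0 := by
  classical
  by_contra h
  push_neg at h
  apply hy0
  have hall : ∀ g, (decompose 𝒜 y g : R) = 0 := by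
    intro g
    by_cases hg : g ∈ T
    · exact h g hg
    · exact decompose_eq_zero_of_not_mem 𝒜 hy hg
  rw [← DirectSum.sum_support_decompose 𝒜 y]
  exact Finset.sum_eq_zero fun g _ => hall g

lemma decompose_mul_left {a : R} (ha : a ∈ 𝒜 0) (y : R) (g : G) :
    (decompose 𝒜 (a * y) g : R) = a * (decompose 𝒜 y g : R) := by
  induction y using DirectSum.Decomposition.inductionOn 𝒜 with
  | zero => simp
  | @homogeneous i m =>
    by_cases hig : i = g
    · subst hig
      rw [decompose_of_mem_same 𝒜 (mul_mem_zero_left 𝒜 ha m.2),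
        decompose_of_mem_same 𝒜 m.2]
    · rw [decompose_of_mem_ne 𝒜 (mul_mem_zero_left 𝒜 ha m.2) hig,
        decompose_of_mem_ne 𝒜 m.2 hig, mul_zero]
  | add m m' hm hm' =>
    rw [mul_add, decompose_add, DirectSum.add_apply, decompose_add, DirectSum.add_apply]
    push_cast
    rw [hm, hm', mul_add]

lemma decompose_mul_right {a : R} (ha : a ∈ 𝒜 0) (y : R) (g : G) :
    (decompose 𝒜 (y * a) g : R) = (decompose 𝒜 y g : R) * a := by
  induction y using DirectSum.Decomposition.inductionOn 𝒜 with
  | zero => simp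
  | @homogeneous i m =>
    by_cases hig : i = g
    · subst hig
      rw [decompose_of_mem_same 𝒜 (mul_mem_zero_right 𝒜 ha m.2),
        decompose_of_mem_same 𝒜 m.2]
    · rw [decompose_of_mem_ne 𝒜 (mul_mem_zero_right 𝒜 ha m.2) hig,
        decompose_of_mem_ne 𝒜 m.2 hig, zero_mul]
  | add m m' hm hm' =>
    rw [add_mul, decompose_add, DirectSum.add_apply, decompose_add, DirectSum.add_apply]
    push_cast
    rw [hm, hm', add_mul]

variable {𝒜}

/-- Composite `R_s → R_S → R_T → R_t`. -/
def toComponent {S T : Set G} (φ : BimodIso 𝒜 (RH 𝒜 S) (RH 𝒜 T)) {s : G} (hs : s ∈ S)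
    (t : G) : 𝒜 s →+ 𝒜 t :=
  (DFinsupp.evalAddMonoidHom t).comp
    ((decomposeAddEquiv 𝒜).toAddMonoidHom.comp
      ((RH 𝒜 T).subtype.comp
        (φ.toEquiv.toAddMonoidHom.comp
          (AddSubgroup.inclusion (le_iSup₂ (f := fun h (_ : h ∈ S) => 𝒜 h) s hs)))))

lemma toComponent_apply {S T : Set G} (φ : BimodIso 𝒜 (RH 𝒜 S) (RH 𝒜 T)) {s : G}
    (hs : s ∈ S) (t : G) {x : R} (hx : x ∈ 𝒜 s) :
    (toComponent φ hs t ⟨x, hx⟩ : R) =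
      (decompose 𝒜 (φ.toEquiv ⟨x, mem_RH 𝒜 hs hx⟩ : R) t : R) := rfl

lemma toComponent_mul_left {S T : Set G} (φ : BimodIso 𝒜 (RH 𝒜 S) (RH 𝒜 T)) {s : G}
    (hs : s ∈ S) (t : G) {a : R} (ha : a ∈ 𝒜 0) (x : 𝒜 s) {h : a * (x : R) ∈ 𝒜 s} :
    (toComponent φ hs t ⟨a * (x : R), h⟩ : R) = a * (toComponent φ hs t x : R) := by
  have e2 : (toComponent φ hs t x : R) =
      (decompose 𝒜 (φ.toEquiv ⟨(x : R), mem_RH 𝒜 hs x.2⟩ : R) t : R) := rfl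
  rw [toComponent_apply φ hs t h, e2,
    φ.map_left a x ha (mem_RH 𝒜 hs x.2) (mem_RH 𝒜 hs h), decompose_mul_left 𝒜 ha]

lemma toComponent_mul_right {S T : Set G} (φ : BimodIso 𝒜 (RH 𝒜 S) (RH 𝒜 T)) {s : G}
    (hs : s ∈ S) (t : G) {a : R} (ha : a ∈ 𝒜 0) (x : 𝒜 s) {h : (x : R) * a ∈ 𝒜 s} :
    (toComponent φ hs t ⟨(x : R) * a, h⟩ : R) = (toComponent φ hs t x : R) * a := by
  have e2 : (toComponent φ hs t x : R) =
      (decompose 𝒜 (φ.toEquiv ⟨(x : R), mem_RH 𝒜 hs x.2⟩ : R) t : R) := rfl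
  rw [toComponent_apply φ hs t h, e2,
    φ.map_right a x ha (mem_RH 𝒜 hs x.2) (mem_RH 𝒜 hs h), decompose_mul_right 𝒜 ha]

lemma mem_of_iso (hsimple : ∀ g : G, IsSimpleBimod 𝒜 (𝒜 g))
    (hgh : ∀ g h : G, Nonempty (BimodIso 𝒜 (𝒜 g) (𝒜 h)) ↔ g = h)
    {S T : Set G} (φ : BimodIso 𝒜 (RH 𝒜 S) (RH 𝒜 T)) {s : G} (hs : s ∈ S) : s ∈ T := by
  obtain ⟨⟨x0, hx0mem⟩, hx0ne'⟩ := AddSubgroup.ne_bot_iff_exists_ne_zero.mp (hsimple s).1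
  have hx0ne : x0 ≠ 0 := by simpa using hx0ne'
  have hξ : (φ.toEquiv ⟨x0, mem_RH 𝒜 hs hx0mem⟩ : R) ≠ 0 := by
    intro h
    apply hx0ne
    have h1 : φ.toEquiv ⟨x0, mem_RH 𝒜 hs hx0mem⟩ = 0 := Subtype.ext h
    have h2 : (⟨x0, mem_RH 𝒜 hs hx0mem⟩ : RH 𝒜 S) = 0 :=
      φ.toEquiv.injective (by rw [h1, map_zero])
    simpa using congrArg Subtype.val h2
  obtain ⟨t, htT, hdt⟩ :=
    exists_component 𝒜 (φ.toEquiv ⟨x0, mem_RH 𝒜 hs hx0mem⟩).2 hξ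
  set f := toComponent φ hs t with hfdef
  have hfx0 : f ⟨x0, hx0mem⟩ ≠ 0 := by
    intro h
    apply hdt
    have := congrArg Subtype.val h
    rwa [hfdef, toComponent_apply φ hs t hx0mem] at this
  -- kernel
  have hKsub : IsSubBimodule 𝒜 (f.ker.map (𝒜 s).subtype) := by
    intro a ha x hx
    obtain ⟨z, hz, rfl⟩ := AddSubgroup.mem_map.mp hx
    have hz0 : f z = 0 := hz
    constructor
    · refine AddSubgroup.mem_map.mpr ⟨⟨a * (z : R), mul_mem_zero_left 𝒜 ha z.2⟩, ?_, rfl⟩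
      refine AddMonoidHom.mem_ker.mpr (Subtype.ext ?_)
      rw [hfdef] at hz0 ⊢
      rw [toComponent_mul_left φ hs t ha z]
      rw [show ((toComponent φ hs t z : 𝒜 t) : R) = ((0 : 𝒜 t) : R) from
        congrArg Subtype.val hz0]
      simp
    · refine AddSubgroup.mem_map.mpr ⟨⟨(z : R) * a, mul_mem_zero_right 𝒜 ha z.2⟩, ?_, rfl⟩
      refine AddMonoidHom.mem_ker.mpr (Subtype.ext ?_)
      rw [hfdef] at hz0 ⊢
      rw [toComponent_mul_right φ hs t ha z]
      rw [show ((toComponent φ hs t z : 𝒜 t) : R) = ((0 : 𝒜 t) : R) from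
        congrArg Subtype.val hz0]
      simp
  have hK : f.ker.map (𝒜 s).subtype = ⊥ := by
    rcases (hsimple s).2 _ (AddSubgroup.map_subtype_le _) hKsub with h | h
    · exact h
    · exfalso
      apply hfx0
      have hx0K : x0 ∈ f.ker.map (𝒜 s).subtype := h.symm ▸ hx0mem
      obtain ⟨z, hz, hze⟩ := AddSubgroup.mem_map.mp hx0K
      have hzz : z = ⟨x0, hx0mem⟩ := Subtype.ext hze
      exact hzz ▸ hz
  have hinj : Function.Injective f := by
    rw [injective_iff_map_eq_zero]
    intro z hz
    have : (z : R) ∈ f.ker.map (𝒜 s).subtype :=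
      AddSubgroup.mem_map.mpr ⟨z, AddMonoidHom.mem_ker.mpr hz, rfl⟩
    rw [hK] at this
    exact Subtype.ext (by simpa using this)
  -- image
  have hLsub : IsSubBimodule 𝒜 (f.range.map (𝒜 t).subtype) := by
    intro a ha y hy
    obtain ⟨w, hw, rfl⟩ := AddSubgroup.mem_map.mp hy
    obtain ⟨z, rfl⟩ := AddMonoidHom.mem_range.mp hw
    constructor
    · refine AddSubgroup.mem_map.mpr ⟨f ⟨a * (z : R), mul_mem_zero_left 𝒜 ha z.2⟩,
        AddMonoidHom.mem_range.mpr ⟨_, rfl⟩, ?_⟩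
      rw [hfdef]
      exact toComponent_mul_left φ hs t ha z
    · refine AddSubgroup.mem_map.mpr ⟨f ⟨(z : R) * a, mul_mem_zero_right 𝒜 ha z.2⟩,
        AddMonoidHom.mem_range.mpr ⟨_, rfl⟩, ?_⟩
      rw [hfdef]
      exact toComponent_mul_right φ hs t ha z
  have hL : f.range.map (𝒜 t).subtype = 𝒜 t := by
    rcases (hsimple t).2 _ (AddSubgroup.map_subtype_le _) hLsub with h | h
    · exfalso
      apply hfx0
      have : ((f ⟨x0, hx0mem⟩ : 𝒜 t) : R) ∈ f.range.map (𝒜 t).subtype :=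
        AddSubgroup.mem_map.mpr ⟨f ⟨x0, hx0mem⟩, AddMonoidHom.mem_range.mpr ⟨_, rfl⟩, rfl⟩
      rw [h] at this
      exact Subtype.ext (by simpa using this)
    · exact h
  have hsurj : Function.Surjective f := by
    intro y
    have : (y : R) ∈ f.range.map (𝒜 t).subtype := hL.symm ▸ y.2
    obtain ⟨w, hw, hwe⟩ := AddSubgroup.mem_map.mp this
    obtain ⟨z, rfl⟩ := AddMonoidHom.mem_range.mp hw
    exact ⟨z, Subtype.ext hwe⟩
  have hiso : Nonempty (BimodIso 𝒜 (𝒜 s) (𝒜 t)) := by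
    refine ⟨⟨AddEquiv.ofBijective f ⟨hinj, hsurj⟩, ?_, ?_⟩⟩
    · intro a x ha hx hax
      exact toComponent_mul_left φ hs t ha ⟨x, hx⟩
    · intro a x ha hx hxa
      exact toComponent_mul_right φ hs t ha ⟨x, hx⟩
  exact ((hgh s t).mp hiso) ▸ htT

/-- Inverse of a bimodule iso, given that the source is a sub-bimodule. -/
def BimodIso.symm' {P Q : AddSubgroup R} (hP : IsSubBimodule 𝒜 P)
    (φ : BimodIso 𝒜 P Q) : BimodIso 𝒜 Q P where
  toEquiv := φ.toEquiv.symm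
  map_left a y ha hy hay := by
    set x := φ.toEquiv.symm ⟨y, hy⟩ with hxdef
    have hax : a * (x : R) ∈ P := (hP a ha x x.2).1
    have h1 : (φ.toEquiv ⟨a * (x : R), hax⟩ : R) = a * (φ.toEquiv ⟨(x : R), x.2⟩ : R) :=
      φ.map_left a x ha x.2 hax
    have h2 : φ.toEquiv ⟨(x : R), x.2⟩ = ⟨y, hy⟩ := φ.toEquiv.apply_symm_apply ⟨y, hy⟩
    have h3 : φ.toEquiv ⟨a * (x : R), hax⟩ = ⟨a * y, hay⟩ := by
      ext; rw [h1, h2]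
    have h4 := congrArg φ.toEquiv.symm h3
    rw [AddEquiv.symm_apply_apply] at h4
    exact (congrArg Subtype.val h4).symm
  map_right a y ha hy hya := by
    set x := φ.toEquiv.symm ⟨y, hy⟩ with hxdef
    have hxa : (x : R) * a ∈ P := (hP a ha x x.2).2
    have h1 : (φ.toEquiv ⟨(x : R) * a, hxa⟩ : R) = (φ.toEquiv ⟨(x : R), x.2⟩ : R) * a :=
      φ.map_right a x ha x.2 hxa
    have h2 : φ.toEquiv ⟨(x : R), x.2⟩ = ⟨y, hy⟩ := φ.toEquiv.apply_symm_apply ⟨y, hy⟩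
    have h3 : φ.toEquiv ⟨(x : R) * a, hxa⟩ = ⟨y * a, hya⟩ := by
      ext; rw [h1, h2]
    have h4 := congrArg φ.toEquiv.symm h3
    rw [AddEquiv.symm_apply_apply] at h4
    exact (congrArg Subtype.val h4).symm

end Stmt8Aux

end Stmt8Aux

/-- If each `R_g` is a simple `R_e`-bimodule, then
(`R_S ≅ R_T ↔ S = T` for all subsets) iff (`R_g ≅ R_h ↔ g = h` for all group elements). -/
theorem stmt8 (𝒜 : G → AddSubgroup R) [GradedRing 𝒜]
    (hsimple : ∀ g : G, Controlled.IsSimpleBimod 𝒜 (𝒜 g)) :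
    (∀ S T : Set G,
        Nonempty (Controlled.BimodIso 𝒜 (Controlled.RH 𝒜 S) (Controlled.RH 𝒜 T)) ↔ S = T) ↔
    (∀ g h : G, Nonempty (Controlled.BimodIso 𝒜 (𝒜 g) (𝒜 h)) ↔ g = h) := by
  have hsing : ∀ g : G, Controlled.RH 𝒜 {g} = 𝒜 g := fun g => by
    simp [Controlled.RH]
  constructor
  · intro hST g h
    rw [← hsing g, ← hsing h, hST, Set.singleton_eq_singleton_iff]
  · intro hgh S T
    constructor
    · intro ⟨φ⟩
      apply Set.Subset.antisymm
      · intro s hs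
        exact Stmt8Aux.mem_of_iso hsimple hgh φ hs
      · intro t ht
        exact Stmt8Aux.mem_of_iso hsimple hgh
          (Stmt8Aux.BimodIso.symm' (Stmt8Aux.isSubBimodule_RH 𝒜 S) φ) ht
    · rintro rfl
      exact ⟨⟨AddEquiv.refl _, fun a x ha hx hax => rfl, fun a x ha hx hax => rfl⟩⟩
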